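/- Let F = F_q with primitive element γ, N = q − 1, and let β_1, ..., β_{r+1} ∈ Z_N be distinct with Σ_{i=1}^{r+1} β_i ≢ 0 (mod N). Then the (r+1)×(r+1) matrix M over F with M_{ℓ,i} = γ^{ℓ·β_i} for 1 ≤ ℓ ≤ r and M_{r+1,i} = γ^{(r+1)β_i} + (−1)^{r+1} is invertible. -/

import Mathlib

open Polynomial Finset

/-- If `β₁,…,β_{r+1} ∈ Z_{q-1}` are distinct with `∑ βᵢ ≢ 0 (mod q-1)`, then the
`(r+1)×(r+1)` matrix of the construction is invertible. -/
theorem statement14 (q r : ℕ) (hr : 1 ≤ r) (F : Type*) [Field F] [Fintype F]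
    (hF : Fintype.card F = q) (γ : F) (hγ : IsPrimitiveRoot γ (q - 1))
    (β : Fin (r + 1) → ZMod (q - 1)) (hdist : Function.Injective β)
    (hsum : (∑ i, β i) ≠ 0) :
    IsUnit (Matrix.of fun (ℓ i : Fin (r + 1)) =>
      if (ℓ : ℕ) < r then γ ^ (((ℓ : ℕ) + 1) * (β i).val)
      else γ ^ ((r + 1) * (β i).val) + (-1) ^ (r + 1)) := by
  have hq : 2 ≤ q := by
    have := Fintype.one_lt_card (α := F)
    omega
  haveI : NeZero (q - 1) := ⟨by omega⟩
  set M : Matrix (Fin (r + 1)) (Fin (r + 1)) F := Matrix.of fun (ℓ i : Fin (r + 1)) =>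
      if (ℓ : ℕ) < r then γ ^ (((ℓ : ℕ) + 1) * (β i).val)
      else γ ^ ((r + 1) * (β i).val) + (-1) ^ (r + 1) with hM
  set x : Fin (r + 1) → F := fun i => γ ^ (β i).val with hx
  have hxinj : Function.Injective x := by
    intro i j h
    apply hdist
    have := hγ.pow_inj (ZMod.val_lt (β i)) (ZMod.val_lt (β j)) h
    exact ZMod.val_injective _ this
  have hMcast : ∀ (ℓ : Fin r) (i : Fin (r + 1)),
      M ℓ.castSucc i = (x i) ^ ((ℓ : ℕ) + 1) := by
    intro ℓ i
    rw [hM]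
    simp only [Matrix.of_apply, Fin.coe_castSucc]
    rw [if_pos ℓ.is_lt, pow_mul']
  have hMlast : ∀ i : Fin (r + 1),
      M (Fin.last r) i = (x i) ^ (r + 1) + (-1) ^ (r + 1) := by
    intro i
    rw [hM]
    simp only [Matrix.of_apply, Fin.val_last]
    rw [if_neg (lt_irrefl r), pow_mul']
  rw [Matrix.isUnit_iff_isUnit_det, isUnit_iff_ne_zero]
  intro hdet
  obtain ⟨v, hv0, hvM⟩ := Matrix.exists_vecMul_eq_zero_iff.mpr hdet
  set c : F := v (Fin.last r) with hc
  set p : F[X] := (∑ ℓ : Fin r, C (v ℓ.castSucc) * X ^ ((ℓ : ℕ) + 1)) +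
      C c * (X ^ (r + 1) + C ((-1) ^ (r + 1))) with hp
  have hpeval : ∀ i, p.eval (x i) = 0 := by
    intro i
    have h := congrFun hvM i
    rw [Matrix.vecMul, dotProduct, Fin.sum_univ_castSucc] at h
    simp only [hMcast, hMlast, Pi.zero_apply] at h
    rw [hp]
    simp only [eval_add, eval_mul, eval_finset_sum, eval_pow, eval_C, eval_X]
    exact h
  set Q : F[X] := C c * ∏ i : Fin (r + 1), (X - C (x i)) with hQ
  have hQmon : (∏ i : Fin (r + 1), (X - C (x i))).Monic :=
    monic_prod_of_monic _ _ fun i _ => monic_X_sub_C _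
  have hQdeg : (∏ i : Fin (r + 1), (X - C (x i))).natDegree = r + 1 := by
    rw [natDegree_prod_of_monic _ _ fun i _ => monic_X_sub_C _]
    simp [natDegree_X_sub_C]
  have hQeval : ∀ i, Q.eval (x i) = 0 := by
    intro i
    simp only [hQ, eval_mul, eval_prod, eval_sub, eval_X, eval_C]
    exact mul_eq_zero_of_right _ (Finset.prod_eq_zero (Finset.mem_univ i) (sub_self _))
  have hpc : p.coeff (r + 1) = c := by
    have hz : (∑ ℓ : Fin r, C (v ℓ.castSucc) * X ^ ((ℓ : ℕ) + 1)).coeff (r + 1) = 0 := by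
      rw [finset_sum_coeff]
      exact Finset.sum_eq_zero fun ℓ _ => by
        rw [coeff_C_mul, coeff_X_pow, if_neg (by omega), mul_zero]
    rw [hp, coeff_add, hz, zero_add, coeff_C_mul, coeff_add, coeff_X_pow, if_pos rfl,
      coeff_C, if_neg (by omega), add_zero, mul_one]
  have hQc : Q.coeff (r + 1) = c := by
    have h2 := hQmon.coeff_natDegree
    rw [hQdeg] at h2
    rw [hQ, coeff_C_mul, h2, mul_one]
  have hple : p.natDegree ≤ r + 1 := by
    apply natDegree_add_le_of_degree_le
    · apply natDegree_sum_le_of_forall_le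
      intro ℓ _
      apply (natDegree_C_mul_le _ _).trans
      simp only [natDegree_X_pow]
      omega
    · exact (natDegree_C_mul_le _ _).trans
        (natDegree_add_le_of_degree_le (natDegree_X_pow _).le (by simp))
  have hQle : Q.natDegree ≤ r + 1 := by
    apply (natDegree_C_mul_le _ _).trans
    rw [hQdeg]
  have hdiffdeg : (p - Q).natDegree ≤ r := by
    rw [natDegree_le_iff_coeff_eq_zero]
    intro m hm
    rcases eq_or_lt_of_le (Nat.succ_le_of_lt hm) with h | h
    · rw [coeff_sub, ← h, hpc, hQc, sub_self]
    · rw [coeff_sub, coeff_eq_zero_of_natDegree_lt (lt_of_le_of_lt hple h),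
        coeff_eq_zero_of_natDegree_lt (lt_of_le_of_lt hQle h), sub_self]
  have hdiff : p - Q = 0 := by
    apply eq_zero_of_natDegree_lt_card_of_eval_eq_zero _ hxinj
    · intro i
      rw [eval_sub, hpeval, hQeval, sub_self]
    · rw [Fintype.card_fin]
      omega
  have hpQ : p = Q := by rwa [sub_eq_zero] at hdiff
  have hp0 : p.eval 0 = c * (-1) ^ (r + 1) := by
    rw [hp]
    simp only [eval_add, eval_mul, eval_finset_sum, eval_pow, eval_C, eval_X]
    rw [Finset.sum_eq_zero]
    · simp [zero_pow (Nat.succ_ne_zero _)]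
    · intro ℓ _
      simp [zero_pow (Nat.succ_ne_zero _)]
  have hQ0 : Q.eval 0 = c * ((-1) ^ (r + 1) * γ ^ (∑ i, (β i).val)) := by
    rw [hQ]
    simp only [eval_mul, eval_prod, eval_sub, eval_X, eval_C, zero_sub]
    congr 1
    rw [Finset.prod_congr rfl fun i _ => (neg_eq_neg_one_mul (x i)), Finset.prod_mul_distrib,
      Finset.prod_const, Finset.card_univ, Fintype.card_fin]
    congr 1
    rw [hx, Finset.prod_pow_eq_pow_sum]
  have hczero : c = 0 := by
    by_contra hcne
    have h1 : (1 : F) = γ ^ (∑ i, (β i).val) := by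
      have h := hpQ ▸ hp0
      rw [hQ0] at h
      field_simp at h
      exact h.symm
    have hdvd : (q - 1) ∣ ∑ i, (β i).val := (hγ.pow_eq_one_iff_dvd _).mp h1.symm
    apply hsum
    have h2 : ((∑ i, (β i).val : ℕ) : ZMod (q - 1)) = 0 :=
      (ZMod.natCast_eq_zero_iff _ _).mpr hdvd
    rw [Nat.cast_sum] at h2
    simp only [ZMod.natCast_zmod_val] at h2
    exact h2
  have hpzero : p = 0 := by rw [hpQ, hQ, hczero, map_zero, zero_mul]
  apply hv0
  funext ℓ
  rcases Fin.eq_castSucc_or_eq_last ℓ with ⟨ℓ', rfl⟩ | rfl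
  · have h := congrArg (fun f => Polynomial.coeff f ((ℓ' : ℕ) + 1)) hpzero
    simp only [hp, coeff_add, finset_sum_coeff, coeff_C_mul, coeff_X_pow, mul_add,
      coeff_zero, coeff_C] at h
    rw [hczero, zero_mul, zero_mul, Finset.sum_eq_single ℓ'] at h
    · simpa using h
    · intro b _ hb
      rw [if_neg, mul_zero]
      intro heq
      exact hb (Fin.ext (by omega))
    · simp
  · exact hczero
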